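/- Let A₁ = [[−2, −3], [1, 0]] and A₂ = [[−20, −300], [1, 0]] be real 2×2 matrices (the companion matrices of the Hurwitz polynomials s² + 2s + 3 and s² + 20s + 300). Then there is no symmetric positive definite real 2×2 matrix P such that both A₁ᵀ P + P A₁ and A₂ᵀ P + P A₂ are negative definite; that is, the switched system obtained by switching between ẋ = A₁x and ẋ = A₂x is not quadratically stable. -/

import Mathlib

open Matrix in
/-- The switched system with companion matrices `A₁ = [[−2,−3],[1,0]]` and
`A₂ = [[−20,−300],[1,0]]` (of the Hurwitz polynomials `s² + 2s + 3` and
`s² + 20s + 300`) is not quadratically stable: no common symmetric positive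
definite Lyapunov matrix `P` exists. -/
theorem no_common_lyapunov_example :
    ¬ ∃ P : Matrix (Fin 2) (Fin 2) ℝ, P.IsSymm ∧ P.PosDef ∧
        (-((!![(-2 : ℝ), -3; 1, 0])ᵀ * P + P * !![(-2 : ℝ), -3; 1, 0])).PosDef ∧
        (-((!![(-20 : ℝ), -300; 1, 0])ᵀ * P + P * !![(-20 : ℝ), -300; 1, 0])).PosDef := by
  rintro ⟨P, hsymm, hP, h1, h2⟩
  have hb : P 1 0 = P 0 1 := by
    conv_lhs => rw [← hsymm]
    rfl
  have hc := hP.dotProduct_mulVec_pos (x := ![0, 1]) (by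
    intro h
    simpa using congrFun h 1)
  have g0 := h1.dotProduct_mulVec_pos (x := ![1, 1]) (by
    intro h
    simpa using congrFun h 0)
  have g1 := h2.dotProduct_mulVec_pos (x := ![20, -3]) (by
    intro h
    simpa using congrFun h 0)
  have g2 := h2.dotProduct_mulVec_pos (x := ![20, -1]) (by
    intro h
    simpa using congrFun h 0)
  simp [Matrix.mulVec, dotProduct, Matrix.mul_apply, Fin.sum_univ_two, Matrix.transpose_apply, Matrix.vecHead, Matrix.vecTail, Matrix.cons_val_zero, Matrix.cons_val_one, hb] at hc g0 g1 g2
  nlinarith [hc, g0, g1, g2]
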